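/- arXiv:0708.2054 — 2 statements merged into one kernel-verified Lean document; each statement's English description precedes it below -/
import Mathlib

section
/- Let n ≥ 4 with n ≡ 0 or 1 (mod 4), set m = n(n−1)/2, and work in ℤ[a_1, …, a_m][X_1, …, X_n][t] with f(s) = 1 + Σ_{i=1}^{m} a_i s^i. Let G(t) = Σ_{σ ∈ S_n} sgn(σ) Π_{1≤i<j≤n} f(t(X_{σ(i)} − X_{σ(j)})). Let ω = (i_1, …, i_m) be a sequence of nonnegative integers with Σ_{l=1}^{m} l·i_l = m such that i_{2l−1} = 0 for every l with 1 ≤ 2l−1 ≤ m (i.e. ω is supported on even positions). Then the coefficient of the monomial t^m · a_1^{i_1} ⋯ a_m^{i_m} in G(t) is the zero polynomial in X_1, …, X_n. (Equivalently, s_ω(U(n)/Tⁿ) = 0 for such ω.) -/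
/-- The set of pairs `i < j` in `Fin n × Fin n`. -/
def flagPairs (n : ℕ) : Finset (Fin n × Fin n) :=
  Finset.univ.filter (fun p => p.1 < p.2)

/-- `f(t·d) = 1 + Σᵢ aᵢ dⁱ tⁱ` as an element of `ℤ[a₁,…,a_m][X₁,…,Xₙ][t]`. -/
noncomputable def fFactor (n m : ℕ) (d : MvPolynomial (Fin n) ℤ) :
    Polynomial (MvPolynomial (Fin m) (MvPolynomial (Fin n) ℤ)) :=
  1 + ∑ i : Fin m,
    Polynomial.C (MvPolynomial.X i * MvPolynomial.C (d ^ (i.1 + 1))) * Polynomial.X ^ (i.1 + 1)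

/-- The substitution killing the odd-indexed variables. -/
noncomputable def gKill (n m : ℕ) : Fin m → MvPolynomial (Fin m) (MvPolynomial (Fin n) ℤ) :=
  fun i => if (i.1 + 1) % 2 = 0 then MvPolynomial.X i else 0

/-- `fFactor` after applying `gKill`. -/
noncomputable def fFactor2 (n m : ℕ) (d : MvPolynomial (Fin n) ℤ) :
    Polynomial (MvPolynomial (Fin m) (MvPolynomial (Fin n) ℤ)) :=
  1 + ∑ i : Fin m,
    Polynomial.C (gKill n m i * MvPolynomial.C (d ^ (i.1 + 1))) * Polynomial.X ^ (i.1 + 1)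

lemma fFactor2_neg (n m : ℕ) (d : MvPolynomial (Fin n) ℤ) :
    fFactor2 n m (-d) = fFactor2 n m d := by
  unfold fFactor2
  refine congrArg (HAdd.hAdd 1) ?_
  refine Finset.sum_congr rfl fun i _ => ?_
  rcases Nat.mod_two_eq_zero_or_one (i.1 + 1) with h | h
  · rw [show ((-d) ^ (i.1 + 1)) = d ^ (i.1 + 1) from Even.neg_pow (Nat.even_iff.mpr h) d]
  · have hg : gKill n m i = 0 := by simp [gKill, h]
    rw [hg, zero_mul, zero_mul]

lemma map_fFactor (n m : ℕ) (d : MvPolynomial (Fin n) ℤ) :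
    Polynomial.map (↑(MvPolynomial.aeval (R := MvPolynomial (Fin n) ℤ) (gKill n m)) :
        MvPolynomial (Fin m) (MvPolynomial (Fin n) ℤ) →+*
        MvPolynomial (Fin m) (MvPolynomial (Fin n) ℤ)) (fFactor n m d) = fFactor2 n m d := by
  unfold fFactor fFactor2
  rw [Polynomial.map_add, Polynomial.map_one, Polynomial.map_sum]
  congr 1
  refine Finset.sum_congr rfl fun i _ => ?_
  rw [Polynomial.map_mul, Polynomial.map_pow, Polynomial.map_X, Polynomial.map_C]
  congr 1
  simp [MvPolynomial.aeval_X, MvPolynomial.algebraMap_eq]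

lemma coeff_aeval_even {n m : ℕ} (ω : Fin m → ℕ)
    (heven : ∀ l : Fin m, (l.1 + 1) % 2 = 1 → ω l = 0)
    (P : MvPolynomial (Fin m) (MvPolynomial (Fin n) ℤ)) :
    MvPolynomial.coeff (Finsupp.equivFunOnFinite.symm ω)
      (MvPolynomial.aeval (R := MvPolynomial (Fin n) ℤ) (gKill n m) P)
    = MvPolynomial.coeff (Finsupp.equivFunOnFinite.symm ω) P := by
  induction P using MvPolynomial.induction_on' with
  | add p q hp hq => rw [map_add, MvPolynomial.coeff_add, MvPolynomial.coeff_add, hp, hq]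
  | monomial d c =>
    by_cases hd : ∀ i ∈ d.support, (i.1 + 1) % 2 = 0
    · have : (MvPolynomial.aeval (R := MvPolynomial (Fin n) ℤ) (gKill n m))
          (MvPolynomial.monomial d c) = MvPolynomial.monomial d c := by
        rw [MvPolynomial.aeval_monomial, MvPolynomial.monomial_eq, MvPolynomial.algebraMap_eq]
        congr 1
        refine Finsupp.prod_congr fun i hi => ?_
        simp only [gKill]
        rw [if_pos (hd i hi)]
      rw [this]
    · push_neg at hd
      obtain ⟨i, hi, hodd⟩ := hd
      have h1 : (i.1 + 1) % 2 = 1 := by omega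
      have hz : (MvPolynomial.aeval (R := MvPolynomial (Fin n) ℤ) (gKill n m))
          (MvPolynomial.monomial d c) = 0 := by
        rw [MvPolynomial.aeval_monomial]
        have hp0 : (d.prod fun i k => gKill n m i ^ k) = 0 := by
          refine Finset.prod_eq_zero hi ?_
          simp only [gKill]
          rw [if_neg (by omega), zero_pow (Finsupp.mem_support_iff.mp hi)]
        rw [hp0, mul_zero]
      have hne : d ≠ Finsupp.equivFunOnFinite.symm ω := by
        intro h
        have hdi : d i = ω i := by rw [h]; rfl
        exact Finsupp.mem_support_iff.mp hi (hdi.trans (heven i h1))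
      rw [hz, MvPolynomial.coeff_zero, MvPolynomial.coeff_monomial, if_neg hne]

lemma sum_sign_eq_zero (n : ℕ) (hn : 2 ≤ n) :
    (∑ σ : Equiv.Perm (Fin n), ((Equiv.Perm.sign σ : ℤˣ) : ℤ)) = 0 := by
  have h01 : (⟨0, by omega⟩ : Fin n) ≠ ⟨1, by omega⟩ := by simp [Fin.ext_iff]
  have key := Equiv.sum_comp (Equiv.mulLeft (Equiv.swap (⟨0, by omega⟩ : Fin n) ⟨1, by omega⟩))
    (fun σ => ((Equiv.Perm.sign σ : ℤˣ) : ℤ))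
  simp only [Equiv.coe_mulLeft, Equiv.Perm.sign_mul, Equiv.Perm.sign_swap h01, Units.val_mul,
    Units.val_neg, Units.val_one, neg_one_mul, Finset.sum_neg_distrib] at key
  omega

lemma prod_fFactor2_perm (n m : ℕ) (σ : Equiv.Perm (Fin n)) :
    (∏ p ∈ flagPairs n, fFactor2 n m (MvPolynomial.X (σ p.1) - MvPolynomial.X (σ p.2)))
    = ∏ p ∈ flagPairs n, fFactor2 n m (MvPolynomial.X p.1 - MvPolynomial.X p.2) := by
  have hmem : ∀ (τ : Equiv.Perm (Fin n)) (p : Fin n × Fin n), p ∈ flagPairs n →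
      (if τ p.1 < τ p.2 then (τ p.1, τ p.2) else (τ p.2, τ p.1)) ∈ flagPairs n := by
    intro τ p hp
    simp only [flagPairs, Finset.mem_filter, Finset.mem_univ, true_and] at hp ⊢
    split_ifs with h
    · exact h
    · exact lt_of_le_of_ne (not_lt.mp h) (fun he => (ne_of_lt hp) (τ.injective he).symm)
  refine Finset.prod_nbij' (fun p => if σ p.1 < σ p.2 then (σ p.1, σ p.2) else (σ p.2, σ p.1))
    (fun q => if σ⁻¹ q.1 < σ⁻¹ q.2 then (σ⁻¹ q.1, σ⁻¹ q.2) else (σ⁻¹ q.2, σ⁻¹ q.1))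
    (hmem σ) (hmem σ⁻¹) ?_ ?_ ?_
  · intro p hp
    simp only [flagPairs, Finset.mem_filter, Finset.mem_univ, true_and] at hp
    by_cases h : σ p.1 < σ p.2 <;>
      simp [h, hp, not_lt.mpr hp.le]
  · intro q hq
    simp only [flagPairs, Finset.mem_filter, Finset.mem_univ, true_and] at hq
    by_cases h : σ⁻¹ q.1 < σ⁻¹ q.2 <;> rw [Equiv.Perm.inv_def] at h <;>
      simp [h, hq, not_lt.mpr hq.le]
  · intro p hp
    by_cases h : σ p.1 < σ p.2
    · simp [h]
    · simp only [if_neg h]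
      rw [show MvPolynomial.X (R := ℤ) (σ p.1) - MvPolynomial.X (σ p.2)
          = -(MvPolynomial.X (σ p.2) - MvPolynomial.X (σ p.1)) by ring, fFactor2_neg]

lemma main_aux (n m k : ℕ) (hn : 2 ≤ n) (ω : Fin m → ℕ)
    (heven : ∀ l : Fin m, (l.1 + 1) % 2 = 1 → ω l = 0) :
    MvPolynomial.coeff (Finsupp.equivFunOnFinite.symm ω)
      ((∑ σ : Equiv.Perm (Fin n),
          (Equiv.Perm.sign σ : ℤ) •
            ∏ p ∈ flagPairs n,
              fFactor n m
                (MvPolynomial.X (σ p.1) - MvPolynomial.X (σ p.2))).coeff k) = 0 := by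
  set φ := (↑(MvPolynomial.aeval (R := MvPolynomial (Fin n) ℤ) (gKill n m)) :
      MvPolynomial (Fin m) (MvPolynomial (Fin n) ℤ) →+*
      MvPolynomial (Fin m) (MvPolynomial (Fin n) ℤ)) with hφ
  have hmap : (∑ σ : Equiv.Perm (Fin n),
      (Equiv.Perm.sign σ : ℤ) •
        ∏ p ∈ flagPairs n,
          fFactor n m (MvPolynomial.X (σ p.1) - MvPolynomial.X (σ p.2))).map φ = 0 := by
    rw [Polynomial.map_sum]
    have hterm : ∀ σ : Equiv.Perm (Fin n),
        (((Equiv.Perm.sign σ : ℤ) • ∏ p ∈ flagPairs n,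
          fFactor n m (MvPolynomial.X (σ p.1) - MvPolynomial.X (σ p.2))).map φ)
        = (Equiv.Perm.sign σ : ℤ) •
            ∏ p ∈ flagPairs n, fFactor2 n m (MvPolynomial.X p.1 - MvPolynomial.X p.2) := by
      intro σ
      rw [← prod_fFactor2_perm n m σ]
      have h1 : (((Equiv.Perm.sign σ : ℤ) • ∏ p ∈ flagPairs n,
          fFactor n m (MvPolynomial.X (σ p.1) - MvPolynomial.X (σ p.2))).map φ)
          = (Equiv.Perm.sign σ : ℤ) • (Polynomial.mapRingHom φ)
              (∏ p ∈ flagPairs n,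
                fFactor n m (MvPolynomial.X (σ p.1) - MvPolynomial.X (σ p.2))) :=
        map_zsmul (Polynomial.mapRingHom φ) _ _
      rw [h1, map_prod]
      congr 1
      refine Finset.prod_congr rfl fun p _ => ?_
      exact map_fFactor n m _
    rw [Finset.sum_congr rfl fun σ _ => hterm σ, ← Finset.sum_smul,
      sum_sign_eq_zero n hn, zero_smul]
  calc MvPolynomial.coeff (Finsupp.equivFunOnFinite.symm ω)
        ((∑ σ : Equiv.Perm (Fin n),
          (Equiv.Perm.sign σ : ℤ) •
            ∏ p ∈ flagPairs n,
              fFactor n m (MvPolynomial.X (σ p.1) - MvPolynomial.X (σ p.2))).coeff k)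
      = MvPolynomial.coeff (Finsupp.equivFunOnFinite.symm ω)
          (φ ((∑ σ : Equiv.Perm (Fin n),
            (Equiv.Perm.sign σ : ℤ) •
              ∏ p ∈ flagPairs n,
                fFactor n m (MvPolynomial.X (σ p.1) - MvPolynomial.X (σ p.2))).coeff k)) :=
        (coeff_aeval_even ω heven _).symm
    _ = MvPolynomial.coeff (Finsupp.equivFunOnFinite.symm ω)
          (((∑ σ : Equiv.Perm (Fin n),
            (Equiv.Perm.sign σ : ℤ) •
              ∏ p ∈ flagPairs n,
                fFactor n m (MvPolynomial.X (σ p.1) - MvPolynomial.X (σ p.2))).map φ).coeff k) :=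
        by rw [Polynomial.coeff_map]
    _ = 0 := by rw [hmap]; simp

/-- For `n ≥ 4` with `n ≡ 0` or `1 (mod 4)`, `m = n(n−1)/2`, and `ω`
supported on even positions with `‖ω‖ = m`, the coefficient of `t^m a₁^{i₁} ⋯ a_m^{i_m}`
in `G(t) = Σ_σ sgn(σ) Π_{i<j} f(t(X_{σ(i)}−X_{σ(j)}))` is the zero polynomial; i.e.
`s_ω(U(n)/Tⁿ) = 0`. -/
theorem s_omega_flag_vanishes_even_support (n : ℕ) (hn : 4 ≤ n)
    (hmod : n % 4 = 0 ∨ n % 4 = 1)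
    (ω : Fin (n * (n - 1) / 2) → ℕ)
    (hω : ∑ l : Fin (n * (n - 1) / 2), (l.1 + 1) * ω l = n * (n - 1) / 2)
    (heven : ∀ l : Fin (n * (n - 1) / 2), (l.1 + 1) % 2 = 1 → ω l = 0) :
    MvPolynomial.coeff (Finsupp.equivFunOnFinite.symm ω)
      ((∑ σ : Equiv.Perm (Fin n),
          (Equiv.Perm.sign σ : ℤ) •
            ∏ p ∈ flagPairs n,
              fFactor n (n * (n - 1) / 2)
                (MvPolynomial.X (σ p.1) - MvPolynomial.X (σ p.2))).coeff
        (n * (n - 1) / 2)) = 0 :=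
  main_aux n (n * (n - 1) / 2) (n * (n - 1) / 2) (by omega) ω heven
end

section
/- Let n ≥ 2 and 1 ≤ l, and let ω = (i_1, …, i_m) with m = n(n−1)/2 be a sequence of nonnegative integers with Σ_{k=1}^{m} k·i_k = m whose nonzero entries occur exactly at positions k_1, …, k_l with k_p ≤ 2n−3 for all p; write k_p = 2(n−1) − q_p, so q_p ≥ 1. If n ≥ 2l and Σ_{p=1}^{l} q_p < l(2l−1), then in ℤ[a_1,…,a_m][X_1,…,X_n][t] with f(s) = 1 + Σ_{i=1}^{m} a_i s^i and G(t) = Σ_{σ ∈ S_n} sgn(σ) Π_{1≤i<j≤n} f(t(X_{σ(i)} − X_{σ(j)})), the coefficient of the monomial t^m · a_1^{i_1} ⋯ a_m^{i_m} in G(t) is the zero polynomial in X_1, …, X_n. (Equivalently, s_ω(U(n)/Tⁿ) = 0.) -/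
open Finset MvPolynomial


lemma sum_ge_range_card_aux : ∀ (c : ℕ) (s : Finset ℕ), s.card = c → ∑ i ∈ range s.card, i ≤ ∑ x ∈ s, x := by
  intro c
  induction c with
  | zero => intro s h; rw [h]; simp
  | succ c ih =>
    intro s h
    have hne : s.Nonempty := by
      rw [← Finset.card_pos, h]; omega
    have hM : s.max' hne ∈ s := s.max'_mem hne
    have hsub : s ⊆ range (s.max' hne + 1) := by
      intro x hx
      simp only [mem_range]
      exact Nat.lt_succ_of_le (s.le_max' x hx)
    have hcard : s.card ≤ s.max' hne + 1 := by
      calc s.card ≤ (range (s.max' hne + 1)).card := Finset.card_le_card hsub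
      _ = s.max' hne + 1 := by simp
    have hce : (s.erase (s.max' hne)).card = c := by
      rw [Finset.card_erase_of_mem hM, h]; omega
    have := ih (s.erase (s.max' hne)) hce
    have hsum : ∑ x ∈ s, x = s.max' hne + ∑ x ∈ s.erase (s.max' hne), x :=
      (Finset.add_sum_erase s id hM).symm
    rw [h, Finset.sum_range_succ]
    have h2 := hce ▸ this
    omega

lemma sum_ge_range_card (s : Finset ℕ) : ∑ i ∈ range s.card, i ≤ ∑ x ∈ s, x :=
  sum_ge_range_card_aux s.card s rfl


-- injective f : Fin n → ℕ with total sum the triangular number has values ≤ n-1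
lemma values_le (n : ℕ) (f : Fin n → ℕ) (hf : Function.Injective f)
    (hsum : ∑ v, f v = ∑ i ∈ range n, i) (v : Fin n) : f v ≤ n - 1 := by
  by_contra hc
  push_neg at hc
  have hvn : n ≤ f v := by omega
  have hn0 : 0 < n := v.pos
  -- sum over others
  classical
  set s : Finset ℕ := Finset.univ.image f with hs
  have hcard : s.card = n := by
    rw [hs, Finset.card_image_of_injective _ hf, Finset.card_univ, Fintype.card_fin]
  have hsum2 : ∑ x ∈ s, x = ∑ v, f v := Finset.sum_image (fun x _ y _ h => hf h)
  have hmem : f v ∈ s := Finset.mem_image_of_mem f (Finset.mem_univ v)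
  have h1 : ∑ x ∈ s, x = f v + ∑ x ∈ s.erase (f v), x := (Finset.add_sum_erase s id hmem).symm
  have h2 : ∑ i ∈ range (n-1), i ≤ ∑ x ∈ s.erase (f v), x := by
    have := sum_ge_range_card (s.erase (f v))
    rwa [Finset.card_erase_of_mem hmem, hcard] at this
  have h3 : ∑ i ∈ range n, i = (n-1) + ∑ i ∈ range (n-1), i := by
    conv_lhs => rw [show n = (n-1) + 1 by omega]
    rw [Finset.sum_range_succ]; omega
  omega


lemma arith_contra (n l s K D T B : ℕ) (hn : 2 ≤ n) (hl : 1 ≤ l) (h2l : 2*l ≤ n)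
    (hs : s ≤ 2*l) (hkey : K ≤ B) (hupper : B + T ≤ s * (n-1))
    (hKD : K + D = l * (2*(n-1))) (hq : D < l*(2*l-1)) (h2T : 2*T + s = s*s) : False := by
  have hKT : K + T ≤ s * (n-1) := by omega
  -- cast to integers; write x = n - 1
  obtain ⟨x, hx⟩ : ∃ x, n = x + 1 := ⟨n - 1, by omega⟩
  subst hx
  simp only [Nat.add_sub_cancel] at hKT hKD
  have hq' : D + 1 ≤ l*(2*l-1) := hq
  have hl2 : l*(2*l-1) = 2*l*l - l := by rw [Nat.mul_sub, mul_one]; ring_nf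
  have hll : l ≤ 2*l*l := by nlinarith
  rw [hl2] at hq'
  -- now integer arithmetic
  have HKT : (K:ℤ) + T ≤ s * x := by exact_mod_cast hKT
  have HKD : (K:ℤ) + D = 2 * l * x := by
    have h' : ((K + D :ℕ):ℤ) = ((l * (2*x) : ℕ) : ℤ) := by rw [hKD]
    push_cast at h'
    linarith
  have HD : (D:ℤ) + 1 ≤ 2*l*l - l := by
    have : ((D + 1:ℕ):ℤ) ≤ ((2*l*l - l : ℕ):ℤ) := by exact_mod_cast hq'
    push_cast [Nat.cast_sub hll] at this
    linarith
  have HT : 2*(T:ℤ) + s = s*s := by exact_mod_cast h2T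
  have Hs : (s:ℤ) ≤ 2*l := by exact_mod_cast hs
  have Hx : 2*(l:ℤ) - 1 ≤ x := by
    have : (2*l:ℕ) ≤ x + 1 := h2l
    have := (Nat.cast_le (α := ℤ)).mpr this
    push_cast at this
    linarith
  have hc0 : (0:ℤ) ≤ 2*(l:ℤ) - s := by linarith
  have hcc : (0:ℤ) ≤ (2*(l:ℤ) - s) * ((2*(l:ℤ) - s) - 1) := by
    rcases (by omega : (2*(l:ℤ) - s) = 0 ∨ 1 ≤ (2*(l:ℤ) - s)) with h | h
    · rw [h]; simp
    · exact mul_nonneg hc0 (by linarith)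
  have e5 : (2*(l:ℤ)-s)*(2*(l:ℤ)-1) ≤ (2*(l:ℤ)-s)*x := mul_le_mul_of_nonneg_left Hx hc0
  nlinarith [hcc, e5, HKT, HKD, HD, HT]

lemma two_T (s : ℕ) : 2*(∑ i ∈ range s, i) + s = s*s := by
  have h := Finset.sum_range_id_mul_two s
  have h3 : s * (s - 1) = s * s - s := by rw [Nat.mul_sub, mul_one]
  have h4 : s ≤ s * s := by nlinarith
  omega

lemma combinatorial_core (n l : ℕ) (hn : 2 ≤ n) (hl : 1 ≤ l)
    (k : Fin l → ℕ) (hkinj : Function.Injective k)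
    (hk2 : ∀ p, k p ≤ 2*n - 3)
    (h2l : 2*l ≤ n)
    (hq : ∑ p : Fin l, (2*(n-1) - k p) < l*(2*l-1))
    (G : Fin n × Fin n → ℕ)
    (hG : ∑ p, G p = ∑ i ∈ range n, i)
    (e : Fin l → Fin n × Fin n) (he : ∀ p, G (e p) = k p)
    (j : Fin n × Fin n → ℕ) (hj : ∀ p, j p ≤ G p)
    (β : Fin n → ℕ)
    (hβ : ∀ v, β v = ∑ p, ((if p.1 = v then j p else 0) + (if p.2 = v then G p - j p else 0)))
    (hβinj : Function.Injective β) : False := by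
  classical
  -- total sum of β
  have hsum : ∑ v, β v = ∑ p, G p := by
    have : ∑ v, β v = ∑ p : Fin n × Fin n, ∑ v : Fin n,
        ((if p.1 = v then j p else 0) + (if p.2 = v then G p - j p else 0)) := by
      rw [Finset.sum_comm]
      exact Finset.sum_congr rfl fun v _ => hβ v
    rw [this]
    refine Finset.sum_congr rfl fun p _ => ?_
    rw [Finset.sum_add_distrib]
    simp only [Finset.sum_ite_eq, Finset.mem_univ, if_true]
    have := hj p
    omega
  have hble : ∀ v, β v ≤ n - 1 := values_le n β hβinj (hsum.trans hG)
  -- e is injective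
  have heinj : Function.Injective e := by
    intro p q hpq
    apply hkinj
    rw [← he p, ← he q, hpq]
  -- the vertex set
  set V : Finset (Fin n) :=
    (Finset.univ.image (fun p => (e p).1)) ∪ (Finset.univ.image (fun p => (e p).2)) with hV
  have hVcard : V.card ≤ 2 * l := by
    calc V.card ≤ (Finset.univ.image (fun p : Fin l => (e p).1)).card
        + (Finset.univ.image (fun p : Fin l => (e p).2)).card := Finset.card_union_le _ _
      _ ≤ l + l := by
          gcongr <;> calc (Finset.univ.image _).card ≤ (Finset.univ : Finset (Fin l)).card :=
            Finset.card_image_le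
          _ = l := by simp
      _ = 2 * l := by ring
  -- contribution of each chosen edge inside V
  have hcontrib : ∀ p : Fin l, k p ≤ ∑ v ∈ V,
      ((if (e p).1 = v then j (e p) else 0) + (if (e p).2 = v then G (e p) - j (e p) else 0)) := by
    intro p
    have h1 : (e p).1 ∈ V := by
      rw [hV]
      exact Finset.mem_union_left _ (Finset.mem_image_of_mem _ (Finset.mem_univ p))
    have h2 : (e p).2 ∈ V := by
      rw [hV]
      exact Finset.mem_union_right _ (Finset.mem_image_of_mem _ (Finset.mem_univ p))
    rw [Finset.sum_add_distrib]
    simp only [Finset.sum_ite_eq, h1, h2, if_true]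
    have := hj (e p)
    have := he p
    omega
  -- key inequality
  have hkey : ∑ p : Fin l, k p ≤ ∑ v ∈ V, β v := by
    have step1 : ∑ p : Fin l, k p ≤ ∑ p : Fin l, ∑ v ∈ V,
        ((if (e p).1 = v then j (e p) else 0) + (if (e p).2 = v then G (e p) - j (e p) else 0)) :=
      Finset.sum_le_sum fun p _ => hcontrib p
    have step2 : ∑ p : Fin l, ∑ v ∈ V,
        ((if (e p).1 = v then j (e p) else 0) + (if (e p).2 = v then G (e p) - j (e p) else 0))
        = ∑ q ∈ Finset.univ.image e, ∑ v ∈ V,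
        ((if q.1 = v then j q else 0) + (if q.2 = v then G q - j q else 0)) := by
      rw [Finset.sum_image (fun x _ y _ h => heinj h)]
    have step3 : ∑ q ∈ Finset.univ.image e, ∑ v ∈ V,
        ((if q.1 = v then j q else 0) + (if q.2 = v then G q - j q else 0))
        ≤ ∑ q : Fin n × Fin n, ∑ v ∈ V,
        ((if q.1 = v then j q else 0) + (if q.2 = v then G q - j q else 0)) :=
      Finset.sum_le_sum_of_subset (Finset.subset_univ _)
    have step4 : ∑ q : Fin n × Fin n, ∑ v ∈ V,
        ((if q.1 = v then j q else 0) + (if q.2 = v then G q - j q else 0))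
        = ∑ v ∈ V, β v := by
      rw [Finset.sum_comm]
      exact Finset.sum_congr rfl fun v _ => (hβ v).symm
    omega
  -- upper bound on ∑_{v ∈ V} β v
  have hupper : ∑ v ∈ V, β v + ∑ i ∈ range V.card, i ≤ V.card * (n - 1) := by
    have hinj : ∀ x ∈ V, ∀ y ∈ V, (n - 1) - β x = (n - 1) - β y → x = y := by
      intro x _ y _ h
      have hx := hble x
      have hy := hble y
      apply hβinj
      omega
    have hcard : (V.image (fun v => (n-1) - β v)).card = V.card :=
      Finset.card_image_of_injOn hinj
    have h1 : ∑ i ∈ range V.card, i ≤ ∑ v ∈ V, ((n-1) - β v) := by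
      have := sum_ge_range_card (V.image (fun v => (n-1) - β v))
      rwa [hcard, Finset.sum_image hinj] at this
    have h2 : ∑ v ∈ V, (β v + ((n-1) - β v)) = V.card * (n-1) := by
      rw [Finset.sum_congr rfl (fun v _ => by have := hble v; omega : ∀ v ∈ V, β v + ((n-1) - β v) = n-1)]
      simp [Finset.sum_const, mul_comm]
    rw [Finset.sum_add_distrib] at h2
    omega
  -- final arithmetic contradiction
  have hKD : ∑ p : Fin l, k p + ∑ p : Fin l, (2*(n-1) - k p) = l * (2*(n-1)) := by
    rw [← Finset.sum_add_distrib]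
    rw [Finset.sum_congr rfl (fun p _ => by have := hk2 p; omega : ∀ p ∈ Finset.univ, k p + (2*(n-1) - k p) = 2*(n-1))]
    simp [mul_comm]
  exact arith_contra n l V.card (∑ p : Fin l, k p) (∑ p : Fin l, (2*(n-1) - k p))
    (∑ i ∈ range V.card, i) (∑ v ∈ V, β v) hn hl h2l hVcard hkey hupper hKD hq (two_T V.card)

lemma support_prod_exists {ι : Type*} [DecidableEq ι] (s : Finset ι)
    (φ : ι → MvPolynomial (Fin n) ℤ) (β : Fin n →₀ ℕ)
    (hβ : β ∈ (∏ p ∈ s, φ p).support) :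
    ∃ γ : ι → (Fin n →₀ ℕ), (∀ p ∈ s, γ p ∈ (φ p).support) ∧ β = ∑ p ∈ s, γ p := by
  classical
  induction s using Finset.induction_on generalizing β with
  | empty =>
    refine ⟨fun _ => 0, by simp, ?_⟩
    rw [Finset.prod_empty, MvPolynomial.mem_support_iff, MvPolynomial.coeff_one] at hβ
    simp only [Finset.sum_empty]
    by_cases h0 : (0 : Fin n →₀ ℕ) = β
    · exact h0.symm
    · simp [h0] at hβ
  | insert _ _ hx ih =>
    rename_i a t
    rw [Finset.prod_insert hx] at hβ
    have := MvPolynomial.support_mul (φ a) (∏ p ∈ t, φ p) hβ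
    rw [Finset.mem_add] at this
    obtain ⟨γa, hγa, δ, hδ, hsum⟩ := this
    obtain ⟨γ, hγ, hδeq⟩ := ih δ hδ
    refine ⟨Function.update γ a γa, ?_, ?_⟩
    · intro p hp
      rcases Finset.mem_insert.mp hp with rfl | hp'
      · simpa using hγa
      · have hpa : p ≠ a := by rintro rfl; exact hx hp'
        rw [Function.update_of_ne hpa]
        exact hγ p hp'
    · rw [Finset.sum_insert hx, Function.update_self]
      rw [← hsum, hδeq]
      congr 1
      refine Finset.sum_congr rfl fun p hp => ?_
      have hpa : p ≠ a := by rintro rfl; exact hx hp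
      rw [Function.update_of_ne hpa]

lemma neg_X_pow_support (b : Fin n) (e : ℕ) :
    ((-X b : MvPolynomial (Fin n) ℤ) ^ e).support ⊆ {Finsupp.single b e} := by
  have h1 : (-X b : MvPolynomial (Fin n) ℤ) ^ e = ((-1:ℤ)^e) • (X b ^ e) := by
    rw [neg_pow, MvPolynomial.smul_eq_C_mul, map_pow, map_neg, map_one]
  rw [h1]
  refine (MvPolynomial.support_smul).trans ?_
  rw [MvPolynomial.support_X_pow]

lemma sub_pow_support (a b : Fin n) (g : ℕ) (β : Fin n →₀ ℕ)
    (hβ : β ∈ ((X a - X b : MvPolynomial (Fin n) ℤ) ^ g).support) :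
    ∃ j ≤ g, β = Finsupp.single a j + Finsupp.single b (g - j) := by
  classical
  rw [sub_eq_add_neg, add_pow] at hβ
  have := MvPolynomial.support_sum hβ
  rw [Finset.mem_biUnion] at this
  obtain ⟨j, hj, hmem⟩ := this
  rw [Finset.mem_range] at hj
  refine ⟨j, by omega, ?_⟩
  have h2 := MvPolynomial.support_mul _ _ hmem
  rw [Finset.mem_add] at h2
  obtain ⟨u, hu, w, hw, huw⟩ := h2
  have h3 := MvPolynomial.support_mul _ _ hu
  rw [Finset.mem_add] at h3
  obtain ⟨u1, hu1, u2, hu2, hu12⟩ := h3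
  have e1 : u1 = Finsupp.single a j := by
    rw [MvPolynomial.support_X_pow] at hu1
    simpa using hu1
  have e2 : u2 = Finsupp.single b (g - j) := by
    have := neg_X_pow_support b (g - j) hu2
    simpa using this
  have e3 : w = 0 := by
    have hcast : ((g.choose j : ℕ) : MvPolynomial (Fin n) ℤ) = C ((g.choose j : ℕ) : ℤ) :=
      (map_natCast (C : ℤ →+* MvPolynomial (Fin n) ℤ) _).symm
    rw [hcast, MvPolynomial.C_apply] at hw
    simpa using MvPolynomial.support_monomial_subset hw
  rw [← huw, ← hu12, e1, e2, e3, add_zero]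

lemma prod_monomial {ι σ : Type*} {R : Type*} [CommSemiring R] (s : Finset ι)
    (μ : ι → (σ →₀ ℕ)) (c : ι → R) :
    (∏ p ∈ s, (monomial (μ p) (c p) : MvPolynomial σ R))
      = monomial (∑ p ∈ s, μ p) (∏ p ∈ s, c p) := by
  classical
  induction s using Finset.induction_on with
  | empty => simp [monomial_zero']  -- monomial 0 1 = 1?
  | insert _ _ hx ih =>
    rename_i a t
    rw [Finset.prod_insert hx, Finset.sum_insert hx, Finset.prod_insert hx, ih, monomial_mul]


lemma key_lemma (n l m : ℕ) (hn : 2 ≤ n) (hl : 1 ≤ l) (hm : m = n*(n-1)/2)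
    (ω : Fin m → ℕ)
    (k : Fin l → ℕ) (hkinj : Function.Injective k)
    (hk2 : ∀ p, k p ≤ 2*n - 3)
    (hωk : ∀ p : Fin l, ∃ i : Fin m, i.1 + 1 = k p ∧ ω i ≠ 0)
    (h2l : 2*l ≤ n)
    (hq : ∑ p : Fin l, (2*(n-1) - k p) < l*(2*l-1))
    (β : Fin n →₀ ℕ) (hβinj : Function.Injective (β : Fin n → ℕ)) :
    MvPolynomial.coeff β (MvPolynomial.coeff (Finsupp.equivFunOnFinite.symm ω)
      ((∏ p ∈ flagPairs n, fFactor n m (X p.1 - X p.2)).coeff m)) = 0 := by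
  classical
  set d : Fin n × Fin n → MvPolynomial (Fin n) ℤ := fun p => X p.1 - X p.2 with hd
  set T : (Fin n × Fin n) → Option (Fin m) →
      Polynomial (MvPolynomial (Fin m) (MvPolynomial (Fin n) ℤ)) :=
    fun p o => o.elim 1 (fun i => if p.1 < p.2 then
      Polynomial.C (MvPolynomial.X i * MvPolynomial.C ((d p)^(i.1+1))) * Polynomial.X^(i.1+1)
      else 0) with hT
  have step1 : ∏ p ∈ flagPairs n, fFactor n m (d p)
      = ∑ g : (Fin n × Fin n) → Option (Fin m), ∏ p, T p (g p) := by
    rw [flagPairs, Finset.prod_filter, ← Fintype.prod_sum]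
    refine Finset.prod_congr rfl fun p _ => ?_
    rw [Fintype.sum_option]
    by_cases h : p.1 < p.2
    · simp only [hT, h, if_true, Option.elim, fFactor]
    · simp only [hT, h, if_false, Option.elim, fFactor]
      simp
  set W : ((Fin n × Fin n) → Option (Fin m)) → (Fin n × Fin n) → ℕ :=
    fun g p => (g p).elim 0 (fun i => i.1+1) with hW
  set A : ((Fin n × Fin n) → Option (Fin m)) → (Fin n × Fin n)
      → MvPolynomial (Fin m) (MvPolynomial (Fin n) ℤ) :=
    fun g p => (g p).elim 1 (fun i => if p.1 < p.2 then
      MvPolynomial.X i * MvPolynomial.C ((d p)^(i.1+1)) else 0) with hA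
  have step2 : ∀ g : (Fin n × Fin n) → Option (Fin m),
      ∏ p, T p (g p) = Polynomial.C (∏ p, A g p) * Polynomial.X ^ (∑ p, W g p) := by
    intro g
    have : ∀ p : Fin n × Fin n, T p (g p) = Polynomial.C (A g p) * Polynomial.X ^ (W g p) := by
      intro p
      rcases hg : g p with _ | i
      · simp [hT, hA, hW, hg]
      · by_cases h : p.1 < p.2
        · simp [hT, hA, hW, hg, h]
        · simp [hT, hA, hW, hg, h]
    rw [Finset.prod_congr rfl (fun p _ => this p), Finset.prod_mul_distrib, ← map_prod,
      Finset.prod_pow_eq_pow_sum]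
  rw [step1]
  rw [Polynomial.finset_sum_coeff]
  rw [Finset.sum_congr rfl (fun g _ => by rw [step2 g])]
  simp only [Polynomial.coeff_C_mul, Polynomial.coeff_X_pow]
  rw [MvPolynomial.coeff_sum]
  rw [MvPolynomial.coeff_sum]
  apply Finset.sum_eq_zero
  intro g _
  by_cases hWm : m = ∑ p, W g p
  swap
  · rw [if_neg hWm, mul_zero]
    simp
  rw [if_pos hWm, mul_one]
  by_cases hpair : ∀ p : Fin n × Fin n, (g p).isSome → p.1 < p.2
  · -- all chosen factors are genuine pairs
    have hAp : ∀ p : Fin n × Fin n,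
        A g p = monomial ((g p).elim 0 (fun i => Finsupp.single i 1)) ((d p)^(W g p)) := by
      intro p
      rcases hg : g p with _ | i
      · simp [hA, hW, hg, monomial_zero']
      · have hp12 : p.1 < p.2 := hpair p (by simp [hg])
        simp only [hA, hW, hg, Option.elim, hp12, if_true]
        rw [MvPolynomial.X, MvPolynomial.C_apply, MvPolynomial.monomial_mul]
        simp
    rw [Finset.prod_congr rfl (fun p _ => hAp p), prod_monomial, MvPolynomial.coeff_monomial]
    by_cases hμ : (∑ p : Fin n × Fin n, (g p).elim 0 (fun i => Finsupp.single i 1))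
        = Finsupp.equivFunOnFinite.symm ω
    swap
    · rw [if_neg hμ]
      simp
    rw [if_pos hμ]
    by_contra hne
    have hβsup : β ∈ (∏ p : Fin n × Fin n, (d p)^(W g p)).support := mem_support_iff.mpr hne
    obtain ⟨γ, hγ, hβeq⟩ := support_prod_exists Finset.univ _ β hβsup
    choose j hj1 hj2 using fun p : Fin n × Fin n =>
      sub_pow_support p.1 p.2 (W g p) (γ p) (hγ p (Finset.mem_univ p))
    have hGsum : ∑ p, W g p = ∑ i ∈ range n, i := by
      rw [← hWm, hm, Finset.sum_range_id]
    have hex : ∀ p : Fin l, ∃ p₀ : Fin n × Fin n, W g p₀ = k p := by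
      intro p
      obtain ⟨i, hik, hωi⟩ := hωk p
      have hω'i : (Finsupp.equivFunOnFinite.symm ω) i ≠ 0 := by simpa using hωi
      rw [← hμ, Finsupp.finset_sum_apply] at hω'i
      obtain ⟨p₀, _, hp₀⟩ := Finset.exists_ne_zero_of_sum_ne_zero hω'i
      refine ⟨p₀, ?_⟩
      rcases hg : g p₀ with _ | i'
      · rw [hg] at hp₀; simp at hp₀
      · rw [hg] at hp₀
        have hii : i' = i := by
          by_contra hii
          simp [Finsupp.single_apply, hii] at hp₀
        simp [hW, hg, hii, hik]
    choose e he using hex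
    have hβpt : ∀ v, β v = ∑ p : Fin n × Fin n,
        ((if p.1 = v then j p else 0) + (if p.2 = v then W g p - j p else 0)) := by
      intro v
      rw [hβeq, Finsupp.finset_sum_apply]
      refine Finset.sum_congr rfl fun p _ => ?_
      rw [hj2 p]
      simp only [Finsupp.add_apply, Finsupp.single_apply]

    exact combinatorial_core n l hn hl k hkinj hk2 h2l hq (W g) hGsum e he j hj1 (⇑β) hβpt hβinj
  · push_neg at hpair
    obtain ⟨p, hs, hnp⟩ := hpair
    have hA0 : A g p = 0 := by
      rcases hg : g p with _ | i
      · rw [hg] at hs; simp at hs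
      · simp [hA, hg, hnp]
    rw [Finset.prod_eq_zero (Finset.mem_univ p) hA0]
    simp


lemma fFactor_map (n m : ℕ) (f : MvPolynomial (Fin n) ℤ →+* MvPolynomial (Fin n) ℤ)
    (d : MvPolynomial (Fin n) ℤ) :
    Polynomial.map (MvPolynomial.map f) (fFactor n m d) = fFactor n m (f d) := by
  unfold fFactor
  rw [Polynomial.map_add, Polynomial.map_one, Polynomial.map_sum]
  congr 1
  refine Finset.sum_congr rfl fun i _ => ?_
  rw [Polynomial.map_mul, Polynomial.map_pow, Polynomial.map_X, Polynomial.map_C,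
    map_mul, MvPolynomial.map_X, MvPolynomial.map_C, map_pow]


/-- Let `ω` with `‖ω‖ = m = n(n−1)/2` have its nonzero entries exactly at
the distinct positions `k₁, …, k_l`, each satisfying `1 ≤ k_p ≤ 2n−3`; write
`k_p = 2(n−1) − q_p` with `q_p ≥ 1`.  If `n ≥ 2l` and `Σ_p q_p < l(2l−1)`, then the
coefficient of `t^m a₁^{i₁} ⋯ a_m^{i_m}` in
`G(t) = Σ_σ sgn(σ) Π_{i<j} f(t(X_{σ(i)}−X_{σ(j)}))` is the zero polynomial; i.e.
`s_ω(U(n)/Tⁿ) = 0`. -/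
theorem s_omega_flag_vanishes_small_q (n l : ℕ) (hn : 2 ≤ n) (hl : 1 ≤ l)
    (ω : Fin (n * (n - 1) / 2) → ℕ)
    (hω : ∑ j : Fin (n * (n - 1) / 2), (j.1 + 1) * ω j = n * (n - 1) / 2)
    (k : Fin l → ℕ) (hkinj : Function.Injective k)
    (hk1 : ∀ p, 1 ≤ k p) (hk2 : ∀ p, k p ≤ 2 * n - 3)
    (hsupp : ∀ j : Fin (n * (n - 1) / 2), ω j ≠ 0 ↔ ∃ p : Fin l, k p = j.1 + 1)
    (h2l : 2 * l ≤ n)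
    (hq : ∑ p : Fin l, (2 * (n - 1) - k p) < l * (2 * l - 1)) :
    MvPolynomial.coeff (Finsupp.equivFunOnFinite.symm ω)
      ((∑ σ : Equiv.Perm (Fin n),
          (Equiv.Perm.sign σ : ℤ) •
            ∏ p ∈ flagPairs n,
              fFactor n (n * (n - 1) / 2)
                (MvPolynomial.X (σ p.1) - MvPolynomial.X (σ p.2))).coeff
        (n * (n - 1) / 2)) = 0 := by
  classical
  set ω' := Finsupp.equivFunOnFinite.symm ω with hω'
  set Q := ∏ p ∈ flagPairs n, fFactor n (n * (n - 1) / 2)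
      (MvPolynomial.X p.1 - MvPolynomial.X p.2) with hQ
  have hren : ∀ σ : Equiv.Perm (Fin n),
      (∏ p ∈ flagPairs n,
        fFactor n (n * (n - 1) / 2) (MvPolynomial.X (σ p.1) - MvPolynomial.X (σ p.2)))
      = Q.map (MvPolynomial.map (MvPolynomial.rename (⇑σ)).toRingHom) := by
    intro σ
    rw [hQ, Polynomial.map_prod]
    refine Finset.prod_congr rfl fun p _ => ?_
    rw [fFactor_map]
    congr 1
    simp
  rw [Finset.sum_congr rfl (fun σ _ => by rw [hren σ])]
  rw [Polynomial.finset_sum_coeff]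
  simp only [Polynomial.coeff_smul, Polynomial.coeff_map]
  rw [MvPolynomial.coeff_sum]
  simp only [MvPolynomial.coeff_smul, MvPolynomial.coeff_map]
  apply MvPolynomial.ext
  intro δ
  rw [MvPolynomial.coeff_sum, MvPolynomial.coeff_zero]
  simp only [MvPolynomial.coeff_smul, smul_eq_mul]
  have hm23 : 2 * n - 3 ≤ n * (n - 1) / 2 := by
    have h1 : (∑ i ∈ Finset.range n, i) * 2 = n * (n - 1) := Finset.sum_range_id_mul_two n
    have h3 : (2 * n - 3) * 2 ≤ n * (n - 1) := by
      rcases Nat.lt_or_ge n 4 with h | h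
      · interval_cases n <;> omega
      · have h4 : 4 * (n - 1) ≤ n * (n - 1) := Nat.mul_le_mul_right _ h
        omega
    have h2 : 2 * n - 3 ≤ ∑ i ∈ Finset.range n, i := by omega
    calc 2 * n - 3 ≤ ∑ i ∈ Finset.range n, i := h2
      _ = n * (n - 1) / 2 := Finset.sum_range_id n
  have hkey : ∀ β : Fin n →₀ ℕ, Function.Injective (⇑β) →
      MvPolynomial.coeff β (MvPolynomial.coeff ω' ((Q.coeff (n * (n - 1) / 2)))) = 0 := by
    intro β hβinj
    have hωk : ∀ p : Fin l, ∃ i : Fin (n * (n - 1) / 2), i.1 + 1 = k p ∧ ω i ≠ 0 := by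
      intro p
      have h1 := hk1 p
      have h2 := hk2 p
      have hlt : k p - 1 < n * (n - 1) / 2 := by omega
      refine ⟨⟨k p - 1, hlt⟩, by simp only [Fin.val_mk]; omega, ?_⟩
      exact (hsupp ⟨k p - 1, hlt⟩).mpr ⟨p, by simp only [Fin.val_mk]; omega⟩
    exact key_lemma n l (n * (n - 1) / 2) hn hl rfl ω k hkinj hk2 hωk h2l hq β hβinj
  by_cases hδ : Function.Injective (⇑δ)
  · apply Finset.sum_eq_zero
    intro σ _
    set δ₀ := Finsupp.mapDomain (⇑σ.symm) δ with hδ₀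
    have hδmap : Finsupp.mapDomain (⇑σ) δ₀ = δ := by
      rw [hδ₀, ← Finsupp.mapDomain_comp]
      have : (⇑σ) ∘ (⇑σ.symm) = id := by
        funext v; simp
      rw [this, Finsupp.mapDomain_id]
    have hδ₀fun : ∀ v, δ₀ v = δ (σ v) := by
      intro v
      rw [hδ₀, Finsupp.mapDomain_equiv_apply]
      simp
    have hδ₀inj : Function.Injective (⇑δ₀) := by
      intro a b hab
      rw [hδ₀fun, hδ₀fun] at hab
      exact σ.injective (hδ hab)
    have hre : MvPolynomial.coeff δ
        ((MvPolynomial.rename (⇑σ)).toRingHom (MvPolynomial.coeff ω' (Q.coeff (n * (n - 1) / 2))))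
        = MvPolynomial.coeff δ₀ (MvPolynomial.coeff ω' (Q.coeff (n * (n - 1) / 2))) := by
      conv_lhs => rw [← hδmap]
      exact MvPolynomial.coeff_rename_mapDomain (⇑σ) σ.injective _ δ₀
    rw [hre, hkey δ₀ hδ₀inj, mul_zero]
  · rw [Function.not_injective_iff] at hδ
    obtain ⟨a, b, hab, hne⟩ := hδ
    set τ := Equiv.swap a b with hτ
    have hτδ : Finsupp.mapDomain (⇑τ) δ = δ := by
      ext v
      rw [Finsupp.mapDomain_equiv_apply]
      rw [hτ, Equiv.symm_swap]
      rcases eq_or_ne v a with rfl | hva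
      · rw [Equiv.swap_apply_left]; exact hab.symm
      · rcases eq_or_ne v b with rfl | hvb
        · rw [Equiv.swap_apply_right]; exact hab
        · rw [Equiv.swap_apply_of_ne_of_ne hva hvb]
    have hpair : ∀ σ : Equiv.Perm (Fin n),
        ((Equiv.Perm.sign (τ * σ) : ℤ)) * MvPolynomial.coeff δ
          ((MvPolynomial.rename (⇑(τ * σ))).toRingHom
            (MvPolynomial.coeff ω' (Q.coeff (n * (n - 1) / 2))))
        = -(((Equiv.Perm.sign σ : ℤ)) * MvPolynomial.coeff δ
          ((MvPolynomial.rename (⇑σ)).toRingHom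
            (MvPolynomial.coeff ω' (Q.coeff (n * (n - 1) / 2))))) := by
      intro σ
      have hsign : ((Equiv.Perm.sign (τ * σ) : ℤ)) = -((Equiv.Perm.sign σ : ℤ)) := by
        rw [Equiv.Perm.sign_mul, hτ, Equiv.Perm.sign_swap hne]
        simp
      have hcoe : (⇑(τ * σ)) = (⇑τ) ∘ (⇑σ) := rfl
      have hrr : (MvPolynomial.rename (⇑(τ * σ))).toRingHom
            (MvPolynomial.coeff ω' (Q.coeff (n * (n - 1) / 2)))
          = MvPolynomial.rename (⇑τ) ((MvPolynomial.rename (⇑σ)).toRingHom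
              (MvPolynomial.coeff ω' (Q.coeff (n * (n - 1) / 2)))) := by
        simp only [AlgHom.toRingHom_eq_coe, RingHom.coe_coe]
        rw [hcoe, ← MvPolynomial.rename_rename]
      have hcτ : MvPolynomial.coeff δ
          (MvPolynomial.rename (⇑τ) ((MvPolynomial.rename (⇑σ)).toRingHom
            (MvPolynomial.coeff ω' (Q.coeff (n * (n - 1) / 2)))))
          = MvPolynomial.coeff δ ((MvPolynomial.rename (⇑σ)).toRingHom
            (MvPolynomial.coeff ω' (Q.coeff (n * (n - 1) / 2)))) := by
        conv_lhs => rw [← hτδ]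
        exact MvPolynomial.coeff_rename_mapDomain (⇑τ) (Equiv.injective τ) _ δ
      rw [hrr, hcτ, hsign]
      ring
    have hsum := Equiv.sum_comp (Equiv.mulLeft τ)
      (fun σ : Equiv.Perm (Fin n) => ((Equiv.Perm.sign σ : ℤ)) * MvPolynomial.coeff δ
        ((MvPolynomial.rename (⇑σ)).toRingHom
          (MvPolynomial.coeff ω' (Q.coeff (n * (n - 1) / 2)))))
    simp only [Equiv.coe_mulLeft] at hsum
    have hneg : ∑ σ : Equiv.Perm (Fin n), ((Equiv.Perm.sign σ : ℤ)) * MvPolynomial.coeff δ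
          ((MvPolynomial.rename (⇑σ)).toRingHom
            (MvPolynomial.coeff ω' (Q.coeff (n * (n - 1) / 2))))
        = -∑ σ : Equiv.Perm (Fin n), ((Equiv.Perm.sign σ : ℤ)) * MvPolynomial.coeff δ
          ((MvPolynomial.rename (⇑σ)).toRingHom
            (MvPolynomial.coeff ω' (Q.coeff (n * (n - 1) / 2)))) := by
      conv_lhs => rw [← hsum]
      rw [← Finset.sum_neg_distrib]
      exact Finset.sum_congr rfl fun σ _ => hpair σ
    omega
end
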